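/- The double integral ∫₀^1 ∫₀^∞ x/((1+x²)(1+x²y²)) dx dy equals π²/8. -/

import Mathlib

open MeasureTheory Real Set Filter Topology

/-- inner integral in y -/
lemma inner_int (x : ℝ) :
    ∫ y in Set.Ioo (0:ℝ) 1, x / ((1 + x^2) * (1 + x^2 * y^2))
      = Real.arctan x / (1 + x^2) := by
  have key : ∫ y in (0:ℝ)..1, x / (1 + (x*y)^2) = Real.arctan x := by
    have hd : ∀ y ∈ Set.uIcc (0:ℝ) 1, HasDerivAt (fun y => Real.arctan (x*y))
        (x / (1 + (x*y)^2)) y := by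
      intro y _
      have h1 : HasDerivAt (fun y : ℝ => x*y) x y := by
        simpa using (hasDerivAt_id y).const_mul x
      have h2 := (Real.hasDerivAt_arctan (x*y)).comp y h1
      exact h2.congr_deriv (by ring)
    have hcont : ContinuousOn (fun y => x / (1 + (x*y)^2)) (Set.uIcc (0:ℝ) 1) := by
      apply ContinuousOn.div continuousOn_const
      · fun_prop
      · intro y _; positivity
    have := intervalIntegral.integral_eq_sub_of_hasDerivAt hd
      (hcont.intervalIntegrable)
    simpa [Real.arctan_zero] using this
  have h01 : (0:ℝ) ≤ 1 := by norm_num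
  rw [← MeasureTheory.integral_Ioc_eq_integral_Ioo,
    ← intervalIntegral.integral_of_le h01]
  have heq : ∀ y : ℝ, x / ((1 + x^2) * (1 + x^2 * y^2))
      = (1 + x^2)⁻¹ * (x / (1 + (x*y)^2)) := by
    intro y
    rw [show (1 + x^2 * y^2) = 1 + (x*y)^2 by ring, div_mul_eq_div_div_swap,
      div_eq_inv_mul]
  simp_rw [heq]
  rw [intervalIntegral.integral_const_mul, key, div_eq_inv_mul]

lemma outer_int :
    ∫ x in Set.Ioi (0:ℝ), Real.arctan x / (1 + x^2) = π^2 / 8 := by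
  have hderiv : ∀ x ∈ Set.Ici (0:ℝ),
      HasDerivAt (fun x => Real.arctan x ^ 2 / 2) (Real.arctan x / (1 + x^2)) x := by
    intro x _
    have h := ((Real.hasDerivAt_arctan x).pow 2).div_const 2
    refine h.congr_deriv ?_
    field_simp
    ring
  have hpos : ∀ x ∈ Set.Ioi (0:ℝ), 0 ≤ Real.arctan x / (1 + x^2) := by
    intro x hx
    have : 0 ≤ Real.arctan x := by
      rw [← Real.arctan_zero]
      exact (Real.arctan_strictMono.le_iff_le).2 (le_of_lt hx)
    positivity
  have htend : Tendsto (fun x => Real.arctan x ^ 2 / 2) atTop (𝓝 (π^2/8)) := by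
    have h1 : Tendsto Real.arctan atTop (𝓝 (π/2)) :=
      Real.tendsto_arctan_atTop.mono_right nhdsWithin_le_nhds
    have := (h1.pow 2).div_const 2
    convert this using 2
    ring
  have := MeasureTheory.integral_Ioi_of_hasDerivAt_of_nonneg'
    hderiv hpos htend
  simpa [Real.arctan_zero] using this

theorem stmt16 :
    ∫ y in Set.Ioo (0:ℝ) 1, ∫ x in Set.Ioi (0:ℝ),
        x / ((1 + x^2) * (1 + x^2 * y^2)) = π^2 / 8 := by
  have hcont : Continuous fun p : ℝ × ℝ =>
      p.2 / ((1 + p.2^2) * (1 + p.2^2 * p.1^2)) := by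
    apply Continuous.div (by fun_prop) (by fun_prop)
    intro p; positivity
  have hint : Integrable (fun p : ℝ × ℝ =>
      p.2 / ((1 + p.2^2) * (1 + p.2^2 * p.1^2)))
      ((volume.restrict (Set.Ioo (0:ℝ) 1)).prod (volume.restrict (Set.Ioi (0:ℝ)))) := by
    rw [MeasureTheory.integrable_prod_iff' hcont.aestronglyMeasurable]
    constructor
    · refine Filter.Eventually.of_forall fun x => ?_
      have : IntegrableOn (fun y : ℝ => x / ((1 + x^2) * (1 + x^2 * y^2)))
          (Set.Icc (0:ℝ) 1) := by
        apply ContinuousOn.integrableOn_compact isCompact_Icc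
        apply Continuous.continuousOn
        apply Continuous.div continuous_const (by fun_prop)
        intro y; positivity
      exact this.mono_set Set.Ioo_subset_Icc_self
    · have hbound : Integrable (fun x : ℝ => (π/2) * (1 + x^2)⁻¹)
          (volume.restrict (Set.Ioi (0:ℝ))) :=
        ((integrable_inv_one_add_sq).const_mul (π/2)).restrict
      apply hbound.mono'
      · exact (hcont.norm.stronglyMeasurable.integral_prod_left').aestronglyMeasurable
      · rw [MeasureTheory.ae_restrict_iff' measurableSet_Ioi]
        refine Filter.Eventually.of_forall fun x hx => ?_
        have hx0 : (0:ℝ) < x := hx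
        have heq : (∫ y in Set.Ioo (0:ℝ) 1, ‖x / ((1 + x^2) * (1 + x^2 * y^2))‖)
            = Real.arctan x / (1 + x^2) := by
          rw [← inner_int x]
          apply MeasureTheory.integral_congr_ae
          refine Filter.Eventually.of_forall fun y => ?_
          simp only [Real.norm_eq_abs]
          rw [abs_of_nonneg]
          positivity
        have harc0 : 0 ≤ Real.arctan x := by
          rw [← Real.arctan_zero]
          exact (Real.arctan_strictMono.le_iff_le).2 (le_of_lt hx0)
        rw [Real.norm_eq_abs, show (fun y : ℝ => ‖(y, x).2 /
            ((1 + (y, x).2^2) * (1 + (y, x).2^2 * (y, x).1^2))‖)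
            = fun y : ℝ => ‖x / ((1 + x^2) * (1 + x^2 * y^2))‖ from rfl, heq,
          abs_of_nonneg (by positivity)]
        have harct : Real.arctan x ≤ π/2 := le_of_lt (Real.arctan_lt_pi_div_two x)
        rw [div_eq_mul_inv]
        apply mul_le_mul_of_nonneg_right harct
        positivity
  calc ∫ y in Set.Ioo (0:ℝ) 1, ∫ x in Set.Ioi (0:ℝ),
        x / ((1 + x^2) * (1 + x^2 * y^2))
      = ∫ x in Set.Ioi (0:ℝ), ∫ y in Set.Ioo (0:ℝ) 1,
        x / ((1 + x^2) * (1 + x^2 * y^2)) :=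
        MeasureTheory.integral_integral_swap hint
    _ = ∫ x in Set.Ioi (0:ℝ), Real.arctan x / (1 + x^2) :=
        MeasureTheory.integral_congr_ae
          (Filter.Eventually.of_forall fun x => inner_int x)
    _ = π^2 / 8 := outer_int
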